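/- Let K_{2m+1} be a self-inversive polynomial of degree 2m+1 whose constant coefficient k_0 is nonzero. Then for every self-inversive polynomial P of degree at most 4m+1 (degree 4m in the even case), there exist a self-inversive polynomial Q of degree at most 2m-1 and a self-inversive polynomial R of degree at most 2m such that P(z) = Q(z) K_{2m+1}(z) + z^m R(z). -/

import Mathlib

open Polynomial Complex

/-- A polynomial is self-inversive of degree `n` (conjugate reciprocal): its coefficients
satisfy `p_j = conj (p_{n-j})` for all `j ≤ n`. -/
def SelfInversive (n : ℕ) (P : Polynomial ℂ) : Prop :=
  P.degree ≤ (n : ℕ) ∧ ∀ j, j ≤ n → P.coeff j = (starRingEnd ℂ) (P.coeff (n - j))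

private lemma reflect_reflect' (N : ℕ) (f : Polynomial ℂ) :
    reflect N (reflect N f) = f := by
  ext i
  simp [coeff_reflect, revAt_invol]

private lemma reflect_sub' (N : ℕ) (f g : Polynomial ℂ) :
    reflect N (f - g) = reflect N f - reflect N g := by
  ext i
  simp [coeff_reflect, coeff_sub]

private lemma si_iff {n : ℕ} {P : Polynomial ℂ} :
    SelfInversive n P ↔ P.degree ≤ (n : ℕ) ∧ P.map (starRingEnd ℂ) = reflect n P := by
  unfold SelfInversive
  refine and_congr_right fun hd => ?_
  constructor
  · intro h
    ext j
    rw [coeff_map, coeff_reflect]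
    rcases le_or_gt j n with hj | hj
    · rw [revAt_le hj, h j hj, Complex.conj_conj]
    · rw [revAt_eq_self_of_lt hj,
        coeff_eq_zero_of_degree_lt (lt_of_le_of_lt hd (by exact_mod_cast hj)), map_zero]
  · intro h j hj
    have := congrArg (fun q => q.coeff j) h
    simp only [coeff_map, coeff_reflect, revAt_le hj] at this
    rw [← this, Complex.conj_conj]

private lemma si_mul {a b : ℕ} {f g : Polynomial ℂ}
    (hf : SelfInversive a f) (hg : SelfInversive b g) : SelfInversive (a + b) (f * g) := by
  rw [si_iff] at hf hg ⊢
  refine ⟨?_, ?_⟩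
  · refine le_trans (degree_mul_le f g) ?_
    refine le_trans (add_le_add hf.1 hg.1) ?_
    rw [← Nat.cast_add]
  · rw [Polynomial.map_mul, hf.2, hg.2,
      ← reflect_mul f g (natDegree_le_iff_degree_le.2 hf.1) (natDegree_le_iff_degree_le.2 hg.1)]

private lemma si_sub {n : ℕ} {f g : Polynomial ℂ}
    (hf : SelfInversive n f) (hg : SelfInversive n g) : SelfInversive n (f - g) := by
  refine ⟨le_trans (degree_sub_le f g) (max_le hf.1 hg.1), fun j hj => ?_⟩
  simp [coeff_sub, hf.2 j hj, hg.2 j hj]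

/-- If `K_{2m+1}` is self-inversive of degree `2m+1` with nonzero constant
coefficient, then every self-inversive polynomial `P` of degree at most `4m` can be
written `P = Q·K_{2m+1} + z^m·R` with `Q` self-inversive of degree `2m-1` and `R`
self-inversive of degree `2m`. -/
theorem stmt_15 (m : ℕ) (K : Polynomial ℂ)
    (hK : SelfInversive (2 * m + 1) K) (hk0 : K.coeff 0 ≠ 0)
    (P : Polynomial ℂ) (hP : SelfInversive (4 * m) P) :
    ∃ Q R : Polynomial ℂ,
      Q.degree < (2 * m : ℕ) ∧ (∀ j, j ≤ 2 * m - 1 → Q.coeff j = (starRingEnd ℂ) (Q.coeff (2 * m - 1 - j))) ∧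
      SelfInversive (2 * m) R ∧
      P = Q * K + Polynomial.X ^ m * R := by
  rcases Nat.eq_zero_or_pos m with rfl | hm
  · refine ⟨0, P, ?_, ?_, ?_, ?_⟩
    · simp [degree_zero]
    · simp
    · simpa using hP
    · simp
  have hm1 : 1 ≤ m := hm
  set n := 2 * m - 1 with hn
  -- the "leading" coefficient of K is nonzero
  have hc : K.coeff (2 * m + 1) ≠ 0 := by
    intro h
    apply hk0
    have h0 := hK.2 0 (by omega)
    simpa [h] using h0
  set c := K.coeff (2 * m + 1) with hcdef
  set K' := reflect (2 * m + 1) K with hK'def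
  have hK'0 : K'.coeff 0 = c := by
    simp [hK'def, coeff_reflect, revAt_le (Nat.zero_le _), hcdef]
  set W := 1 - Polynomial.C c⁻¹ * K' with hW
  have hXW : (Polynomial.X : Polynomial ℂ) ∣ W := by
    rw [Polynomial.X_dvd_iff]
    simp [hW, hK'0, inv_mul_cancel₀ hc]
  set V := Polynomial.C c⁻¹ * (∑ i ∈ Finset.range m, W ^ i) with hV
  have hKV : (Polynomial.X : Polynomial ℂ) ^ m ∣ 1 - K' * V := by
    have hK'eq : K' = Polynomial.C c * (1 - W) := by
      rw [hW, sub_sub_cancel, ← mul_assoc, ← Polynomial.C_mul, mul_inv_cancel₀ hc,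
        Polynomial.C_1, one_mul]
    have hgeom : (1 - W) * (∑ i ∈ Finset.range m, W ^ i) = 1 - W ^ m := by
      linear_combination -(geom_sum_mul W m)
    have hCc : Polynomial.C c * Polynomial.C c⁻¹ = 1 := by
      rw [← Polynomial.C_mul, mul_inv_cancel₀ hc, Polynomial.C_1]
    have hKVeq : K' * V = 1 - W ^ m := by
      calc K' * V = (Polynomial.C c * Polynomial.C c⁻¹) *
            ((1 - W) * ∑ i ∈ Finset.range m, W ^ i) := by rw [hK'eq, hV]; ring
        _ = 1 - W ^ m := by rw [hCc, hgeom, one_mul]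
    rw [hKVeq, sub_sub_cancel]
    exact pow_dvd_pow_of_dvd hXW m
  set P' := reflect (4 * m) P with hP'def
  set A := (P' * V) %ₘ (Polynomial.X ^ m) with hAdef
  have hmonic : (Polynomial.X ^ m : Polynomial ℂ).Monic := monic_X_pow m
  have hAdeg : A.degree < (m : ℕ) := by
    have := degree_modByMonic_lt (P' * V) hmonic
    simpa [degree_X_pow] using this
  have hAc : ∀ j, m ≤ j → A.coeff j = 0 := fun j hj =>
    coeff_eq_zero_of_degree_lt (lt_of_lt_of_le hAdeg (by exact_mod_cast hj))
  have hdvdA : (Polynomial.X : Polynomial ℂ) ^ m ∣ P' * V - A :=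
    ⟨(P' * V) /ₘ (Polynomial.X ^ m), by rw [hAdef]; linear_combination -(modByMonic_add_div (P' * V) (Polynomial.X ^ m))⟩
  have hPKA : (Polynomial.X : Polynomial ℂ) ^ m ∣ P' - K' * A := by
    have heq : P' - K' * A = P' * (1 - K' * V) + K' * (P' * V - A) := by ring
    rw [heq]
    exact dvd_add (Dvd.dvd.mul_left hKV P') (Dvd.dvd.mul_left hdvdA K')
  -- construction of Q
  set Q := A.map (starRingEnd ℂ) + reflect n A with hQdef
  have hQc : ∀ j, Q.coeff j = (starRingEnd ℂ) (A.coeff j) + A.coeff (revAt n j) := by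
    intro j; simp [hQdef, coeff_map, coeff_reflect]
  have hQhigh : ∀ j, 2 * m ≤ j → Q.coeff j = 0 := by
    intro j hj
    rw [hQc, hAc j (by omega), revAt_eq_self_of_lt (by omega), hAc j (by omega), map_zero,
      add_zero]
  have hQdeg : Q.degree < ((2 * m : ℕ) : WithBot ℕ) := by
    rw [degree_lt_iff_coeff_zero]
    intro i hi
    exact hQhigh i hi
  have hQsym : ∀ j, j ≤ n → Q.coeff j = (starRingEnd ℂ) (Q.coeff (n - j)) := by
    intro j hj
    rw [hQc, hQc, revAt_le hj, revAt_le (Nat.sub_le n j), Nat.sub_sub_self hj]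
    simp only [map_add, Complex.conj_conj]
    ring
  have hQdegle : Q.degree ≤ (n : ℕ) := by
    rw [degree_le_iff_coeff_zero]
    intro i hi
    have hni : n < i := by exact_mod_cast hi
    exact hQhigh i (by omega)
  have hQsi : SelfInversive n Q := ⟨hQdegle, hQsym⟩
  have hdvdQ' : (Polynomial.X : Polynomial ℂ) ^ m ∣ reflect n Q - A := by
    have hreflQ : reflect n Q = reflect n (A.map (starRingEnd ℂ)) + A := by
      rw [hQdef, reflect_add, reflect_reflect']
    rw [hreflQ, add_sub_cancel_right, Polynomial.X_pow_dvd_iff]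
    intro d hd
    rw [coeff_reflect, revAt_le (by omega), coeff_map, hAc _ (by omega), map_zero]
  -- S := P - Q * K
  have hQK : SelfInversive (4 * m) (Q * K) := by
    have h4 := si_mul hQsi hK
    have : n + (2 * m + 1) = 4 * m := by omega
    rwa [this] at h4
  set S := P - Q * K with hSdef
  have hSsi : SelfInversive (4 * m) S := si_sub hP hQK
  have hreflS : reflect (4 * m) S = P' - reflect n Q * K' := by
    rw [hSdef, reflect_sub', hP'def, hK'def]
    congr 1
    have h4 : 4 * m = n + (2 * m + 1) := by omega
    rw [h4]
    exact reflect_mul Q K (natDegree_le_iff_degree_le.2 hQdegle)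
      (natDegree_le_iff_degree_le.2 hK.1)
  have hdvdS : (Polynomial.X : Polynomial ℂ) ^ m ∣ reflect (4 * m) S := by
    rw [hreflS]
    have heq : P' - reflect n Q * K' = (P' - K' * A) + K' * (A - reflect n Q) := by ring
    rw [heq]
    exact dvd_add hPKA (Dvd.dvd.mul_left (dvd_sub_comm.mp hdvdQ') K')
  have hShigh : ∀ i, 3 * m < i → S.coeff i = 0 := by
    intro i hi
    rcases le_or_gt i (4 * m) with h4 | h4
    · have h0 := (Polynomial.X_pow_dvd_iff.mp hdvdS) (4 * m - i) (by omega)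
      rwa [coeff_reflect, revAt_le (by omega), (by omega : 4 * m - (4 * m - i) = i)] at h0
    · exact coeff_eq_zero_of_degree_lt (lt_of_le_of_lt hSsi.1 (by exact_mod_cast h4))
  have hSlow : ∀ j, j < m → S.coeff j = 0 := by
    intro j hj
    rw [hSsi.2 j (by omega), hShigh (4 * m - j) (by omega), map_zero]
  obtain ⟨R, hR⟩ := Polynomial.X_pow_dvd_iff.mpr hSlow
  have hRc : ∀ j, R.coeff j = S.coeff (j + m) := by
    intro j; rw [hR, coeff_X_pow_mul]
  have hRhigh : ∀ j, 2 * m < j → R.coeff j = 0 := fun j hj => by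
    rw [hRc, hShigh (j + m) (by omega)]
  have hRdeg : R.degree ≤ ((2 * m : ℕ) : WithBot ℕ) := by
    rw [degree_le_iff_coeff_zero]
    intro i hi
    have h2 : 2 * m < i := by exact_mod_cast hi
    exact hRhigh i h2
  have hRsym : ∀ j, j ≤ 2 * m → R.coeff j = (starRingEnd ℂ) (R.coeff (2 * m - j)) := by
    intro j hj
    rw [hRc, hRc, hSsi.2 (j + m) (by omega)]
    congr 2
    omega
  refine ⟨Q, R, hQdeg, hQsym, ⟨hRdeg, hRsym⟩, ?_⟩
  have hfin : P - Q * K = Polynomial.X ^ m * R := hSdef ▸ hR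
  linear_combination hfin
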